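/- Let G be a finite group, φ a fixed-point-free endomorphism of G with quasi-inverse ψ, and let n be such that ker(φⁿ) = ker(φⁿ⁺¹) and φⁿ(G) = φⁿ⁺¹(G). Then ψ maps K = ker(φⁿ) into K and H = φⁿ(G) into H. -/

import Mathlib

/-- The map `1 - φ : x ↦ x·φ(x)⁻¹` associated to an endomorphism `φ`. -/
def oneSub {G : Type*} [Group G] (φ : G →* G) : G → G := fun x => x * (φ x)⁻¹

/-- `ψ` is a quasi-inverse of `φ` if `1 - ψ` is the two-sided inverse of `1 - φ`
under composition. -/
def IsQuasiInverse {G : Type*} [Group G] (φ ψ : G →* G) : Prop :=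
  Function.LeftInverse (oneSub ψ) (oneSub φ) ∧
    Function.RightInverse (oneSub ψ) (oneSub φ)

/-- If `S` is a subgroup invariant under `φ`, then it is invariant under any
quasi-inverse `ψ` of `φ`. -/
lemma quasiInverse_invariant {G : Type*} [Group G] [Finite G] (φ ψ : G →* G)
    (h : IsQuasiInverse φ ψ) (S : Subgroup G) (hS : ∀ x ∈ S, φ x ∈ S) :
    ∀ x ∈ S, ψ x ∈ S := by
  have hinj : Function.Injective (oneSub φ) := h.1.injective
  have key : ∀ x : G, ψ (oneSub φ x) = (φ x)⁻¹ := by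
    intro x
    have h1 : oneSub φ x * (ψ (oneSub φ x))⁻¹ = x := h.1 x
    have h2 : (ψ (oneSub φ x))⁻¹ = (oneSub φ x)⁻¹ * x :=
      eq_inv_mul_iff_mul_eq.mpr h1
    calc ψ (oneSub φ x) = ((ψ (oneSub φ x))⁻¹)⁻¹ := (inv_inv _).symm
      _ = ((oneSub φ x)⁻¹ * x)⁻¹ := by rw [h2]
      _ = (φ x)⁻¹ := by simp only [oneSub]; group
  have hmem : ∀ s : S, oneSub φ (s : G) ∈ S := fun s =>
    S.mul_mem s.2 (S.inv_mem (hS s s.2))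
  have hsurj : Function.Surjective (fun s : S => (⟨oneSub φ s, hmem s⟩ : S)) := by
    rw [← Finite.injective_iff_surjective]
    intro a b hab
    exact Subtype.ext (hinj (congrArg Subtype.val hab))
  intro x hx
  obtain ⟨⟨k, hk⟩, hfk⟩ := hsurj ⟨x, hx⟩
  have hfk' : oneSub φ k = x := congrArg Subtype.val hfk
  have : ψ x = (φ k)⁻¹ := by rw [← hfk']; exact key k
  rw [this]
  exact S.inv_mem (hS k hk)

/-- If the fixed-point-free endomorphism `φ` of the finite group `G` has a
quasi-inverse `ψ`, and `n` is an index where the kernels and images of the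
powers of `φ` stabilize, then `ψ` maps `K = ker(φ^n)` into itself and
`H = im(φ^n)` into itself. -/
theorem quasiInverse_preserves_fitting_decomposition
    {G : Type*} [Group G] [Finite G] (φ ψ : Monoid.End G)
    (hφ : ∀ x : G, φ x = x → x = 1)
    (h : IsQuasiInverse φ ψ)
    (n : ℕ)
    (hker : MonoidHom.ker (φ ^ n) = MonoidHom.ker (φ ^ (n + 1)))
    (hrange : MonoidHom.range (φ ^ n) = MonoidHom.range (φ ^ (n + 1))) :
    (∀ x ∈ MonoidHom.ker (φ ^ n), ψ x ∈ MonoidHom.ker (φ ^ n)) ∧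
    (∀ x ∈ MonoidHom.range (φ ^ n), ψ x ∈ MonoidHom.range (φ ^ n)) := by
  have key1 : ∀ y : G, (φ ^ (n+1)) y = (φ ^ n) (φ y) := by
    intro y; rw [pow_succ]; rfl
  have key2 : ∀ y : G, (φ ^ (n+1)) y = φ ((φ ^ n) y) := by
    intro y; rw [pow_succ']; rfl
  constructor
  · apply quasiInverse_invariant φ ψ h
    intro x hx
    rw [hker] at hx; replace hx : (φ ^ (n+1)) x = 1 := hx
    show (φ ^ n) (φ x) = 1; rw [← key1]
    exact hx
  · apply quasiInverse_invariant φ ψ h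
    intro x hx
    rw [hrange]
    obtain ⟨y, hy⟩ := hx
    exact ⟨y, by show (φ ^ (n+1)) y = φ x; rw [key2, show (φ ^ n) y = x from hy]⟩
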